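/- For every g in Thompson's group T, the permutation of D = ℤ[1/2]/ℤ induced by g is a piecewise automorphism of the graph Γ: there exists a finite subset F ⊆ D such that for all u, v ∈ D \ F, u and v are adjacent in Γ if and only if g(u) and g(v) are adjacent in Γ. -/

import Mathlib

noncomputable section

/-- The circle `𝕋 = ℝ/ℤ`. -/
abbrev Circle𝕋 := AddCircle (1 : ℝ)

/-- A real number is dyadic if it belongs to `ℤ[1/2]`. -/
def IsDyadic (x : ℝ) : Prop := ∃ (p : ℤ) (n : ℕ), x = (p : ℝ) / 2 ^ n

/-- `φ : ℝ → ℝ` is a lift of a piecewise dyadic affine homeomorphism of the circle. -/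
def IsPDALift (φ : ℝ → ℝ) : Prop :=
  StrictMono φ ∧ Function.Surjective φ ∧ (∀ x : ℝ, φ (x + 1) = φ x + 1) ∧
  IsDyadic (φ 0) ∧
  ∃ B : Finset ℝ, (↑B : Set ℝ) ⊆ Set.Ico (0 : ℝ) 1 ∧ (∀ b ∈ B, IsDyadic b) ∧
    ∀ u v : ℝ, u < v → (∀ c ∈ B, ∀ k : ℤ, c + (k : ℝ) ∉ Set.Ioo u v) →
      ∃ n : ℤ, ∀ x ∈ Set.Ioo u v, ∀ y ∈ Set.Ioo u v, φ x - φ y = (2 : ℝ) ^ n * (x - y)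

/-- A homeomorphism of the circle is piecewise dyadic affine if it admits a suitable lift. -/
def IsPDA (g : Homeomorph Circle𝕋 Circle𝕋) : Prop :=
  ∃ φ : ℝ → ℝ, IsPDALift φ ∧ ∀ x : ℝ, g ((x : ℝ) : Circle𝕋) = ((φ x : ℝ) : Circle𝕋)

/-- The set `D = ℤ[1/2]/ℤ` of dyadic points of the circle. -/
def dyadicPoints : Set Circle𝕋 := {x | ∃ r : ℝ, IsDyadic r ∧ x = ((r : ℝ) : Circle𝕋)}

/-- The graph `Γ` on the dyadic points of the circle (the rooted dyadic tree with one extra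
edge): for every standard dyadic interval `I = [k/2^n, (k+1)/2^n]` with `n ≥ 1`, the midpoint
`(2k+1)/2^{n+1}` of `I` is adjacent to the midpoints `(4k+1)/2^{n+2}` and `(4k+3)/2^{n+2}` of
the two halves of `I`; in addition `0` is adjacent to `1/2`. -/
def GammaAdj (x y : Circle𝕋) : Prop :=
  (∃ n : ℕ, 1 ≤ n ∧ ∃ k : ℕ, k < 2 ^ n ∧
    ((x = (((2 * (k : ℝ) + 1) / 2 ^ (n + 1) : ℝ) : Circle𝕋) ∧
        (y = (((4 * (k : ℝ) + 1) / 2 ^ (n + 2) : ℝ) : Circle𝕋) ∨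
         y = (((4 * (k : ℝ) + 3) / 2 ^ (n + 2) : ℝ) : Circle𝕋))) ∨
     (y = (((2 * (k : ℝ) + 1) / 2 ^ (n + 1) : ℝ) : Circle𝕋) ∧
        (x = (((4 * (k : ℝ) + 1) / 2 ^ (n + 2) : ℝ) : Circle𝕋) ∨
         x = (((4 * (k : ℝ) + 3) / 2 ^ (n + 2) : ℝ) : Circle𝕋))))) ∨
  (x = (0 : Circle𝕋) ∧ y = (((1 / 2 : ℝ) : ℝ) : Circle𝕋)) ∨
  (y = (0 : Circle𝕋) ∧ x = (((1 / 2 : ℝ) : ℝ) : Circle𝕋))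

namespace ThompsonAux

open Set

/-- exact dyadic level -/
def ExactLev (x : ℝ) (m : ℕ) : Prop := ∃ j : ℤ, Odd j ∧ x = (j : ℝ) / 2 ^ m

lemma coe_eq_coe (x y : ℝ) : ((x : ℝ) : Circle𝕋) = ((y : ℝ) : Circle𝕋) ↔ ∃ k : ℤ, x = y + k := by
  rw [QuotientAddGroup.eq_iff_sub_mem]
  simp only [AddSubgroup.mem_zmultiples_iff, zsmul_eq_mul, mul_one]
  constructor
  · rintro ⟨k, hk⟩; exact ⟨k, by linarith⟩
  · rintro ⟨k, hk⟩; exact ⟨k, by rw [hk]; ring⟩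

lemma coe_shift {x y : ℝ} (h : ((x : ℝ) : Circle𝕋) = ((y : ℝ) : Circle𝕋)) (d : ℝ) :
    ((x + d : ℝ) : Circle𝕋) = ((y + d : ℝ) : Circle𝕋) := by
  obtain ⟨k, hk⟩ := (coe_eq_coe x y).mp h
  exact (coe_eq_coe _ _).mpr ⟨k, by rw [hk]; ring⟩

lemma odd_aux {p q : ℕ} {i i' : ℤ} (hi : Odd i) (hi' : Odd i')
    (h : i * 2 ^ q = i' * 2 ^ p) (hpq : p < q) : False := by
  obtain ⟨d, rfl⟩ : ∃ d, q = p + d + 1 := ⟨q - p - 1, by omega⟩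
  have h2 : i * 2 ^ (p + d + 1) = (i * 2 ^ d * 2) * 2 ^ p := by ring
  rw [h2] at h
  have h3 : i * 2 ^ d * 2 = i' := by
    have hp : (2:ℤ) ^ p ≠ 0 := by positivity
    exact mul_right_cancel₀ hp h
  rcases hi' with ⟨r, hr⟩
  omega

lemma exactLev_unique {x : ℝ} {m m' : ℕ} (h : ExactLev x m) (h' : ExactLev x m') : m = m' := by
  obtain ⟨j, hj, rfl⟩ := h
  obtain ⟨j', hj', he⟩ := h'
  have key : (j : ℝ) * 2 ^ m' = (j' : ℝ) * 2 ^ m := by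
    have h1 : (0:ℝ) < 2 ^ m := by positivity
    have h2 : (0:ℝ) < 2 ^ m' := by positivity
    field_simp at he
    linarith
  have keyz : j * 2 ^ m' = j' * 2 ^ m := by exact_mod_cast key
  rcases lt_trichotomy m m' with h | h | h
  · exact absurd (odd_aux hj hj' keyz h) not_false
  · exact h
  · exact absurd (odd_aux hj' hj keyz.symm h) not_false

lemma exactLev_add_int {x : ℝ} {m : ℕ} (hm : 1 ≤ m) (h : ExactLev x m) (k : ℤ) :
    ExactLev (x + k) m := by
  obtain ⟨j, hj, rfl⟩ := h
  refine ⟨j + k * 2 ^ m, ?_, ?_⟩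
  · obtain ⟨r, hr⟩ := hj
    refine ⟨r + k * 2 ^ (m - 1), ?_⟩
    have h2 : (2:ℤ) ^ m = 2 ^ (m-1) * 2 := by rw [← pow_succ]; congr 1; omega
    have h3 : k * 2 ^ m = 2 * (k * 2 ^ (m-1)) := by rw [h2]; ring
    omega
  · have h1 : (0:ℝ) < 2 ^ m := by positivity
    push_cast
    field_simp

lemma exactLev_ne_int {x : ℝ} {m : ℕ} (hm : 1 ≤ m) (h : ExactLev x m) (k : ℤ) :
    x ≠ (k : ℝ) := by
  obtain ⟨j, hj, rfl⟩ := h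
  intro he
  have h1 : (0:ℝ) < 2 ^ m := by positivity
  have : (j : ℝ) = (k * 2 ^ m : ℤ) := by push_cast; field_simp at he ⊢; linarith
  have hjz : j = k * 2 ^ m := by exact_mod_cast this
  obtain ⟨r, hr⟩ := hj
  have h2 : (2:ℤ) ^ m = 2 ^ (m-1) * 2 := by rw [← pow_succ]; congr 1; omega
  have h3 : j = 2 * (k * 2 ^ (m-1)) := by rw [hjz, h2]; ring
  omega

lemma exactLev_ne_half {x : ℝ} {m : ℕ} (hm : 2 ≤ m) (h : ExactLev x m) (k : ℤ) :
    x ≠ 1/2 + (k : ℝ) := by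
  obtain ⟨j, hj, rfl⟩ := h
  intro he
  have h1 : (0:ℝ) < 2 ^ m := by positivity
  have hsplit : (2:ℝ) ^ m = 2 ^ (m-1) * 2 := by rw [← pow_succ]; congr 1; omega
  have : (j : ℝ) = ((1 + 2*k) * 2 ^ (m-1) : ℤ) := by
    push_cast
    rw [div_eq_iff (ne_of_gt h1)] at he
    rw [he, hsplit]; ring
  have hjz : j = (1 + 2*k) * 2 ^ (m-1) := by exact_mod_cast this
  obtain ⟨r, hr⟩ := hj
  have h2 : (2:ℤ) ^ (m-1) = 2 ^ (m-2) * 2 := by rw [← pow_succ]; congr 1; omega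
  have h3 : j = 2 * ((1 + 2*k) * 2 ^ (m-2)) := by rw [hjz, h2]; ring
  omega

lemma exactLev_bounds {a : ℝ} {m : ℕ} (h : ExactLev a m) (ha : a ∈ Set.Ioo (0:ℝ) 1) :
    1 ≤ m ∧ 1/2^m ≤ a ∧ a ≤ 1 - 1/2^m ∧ ∃ k : ℕ, k < 2^(m-1) ∧ a = (2*(k:ℝ)+1)/2^m := by
  obtain ⟨j, hj, rfl⟩ := h
  have h1 : (0:ℝ) < 2 ^ m := by positivity
  have hj0 : 0 < j := by
    by_contra hc; push_neg at hc
    have : (j:ℝ) ≤ 0 := by exact_mod_cast hc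
    have : (j:ℝ)/2^m ≤ 0 := div_nonpos_of_nonpos_of_nonneg this h1.le
    linarith [ha.1]
  have hjm : j < 2 ^ m := by
    by_contra hc; push_neg at hc
    have : ((2:ℤ)^m : ℝ) ≤ (j:ℝ) := by exact_mod_cast hc
    push_cast at this
    have : (1:ℝ) ≤ (j:ℝ)/2^m := by rw [le_div_iff₀ h1]; linarith
    linarith [ha.2]
  have hm1 : 1 ≤ m := by
    rcases Nat.eq_zero_or_pos m with h0 | h0
    · exfalso; subst h0
      simp only [pow_zero, div_one] at ha
      have : (0:ℝ) < j := ha.1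
      have : (1:ℝ) ≤ j := by exact_mod_cast hj0
      linarith [ha.2]
    · exact h0
  refine ⟨hm1, ?_, ?_, ?_⟩
  · have hj1 : (1:ℝ) ≤ (j:ℝ) := by exact_mod_cast hj0
    gcongr
  · have hjub : (j:ℝ) ≤ 2^m - 1 := by
      have h6 : j + 1 ≤ 2^m := by omega
      have h7 : ((j:ℝ) + 1) ≤ (2:ℝ)^m := by exact_mod_cast h6
      linarith
    rw [div_le_iff₀ h1]
    have hexp : ((1:ℝ) - 1/2^m) * 2^m = 2^m - 1 := by
      rw [sub_mul, one_mul, one_div, inv_mul_cancel₀ h1.ne']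
    linarith
  · obtain ⟨r, hr⟩ := hj
    have hr0 : 0 ≤ r := by omega
    refine ⟨r.toNat, ?_, ?_⟩
    · have h2 : (2:ℤ)^m = 2^(m-1)*2 := by rw [← pow_succ]; congr 1; omega
      have hrlt : r < 2^(m-1) := by omega
      have h4 : (r.toNat : ℤ) = r := Int.toNat_of_nonneg hr0
      have h5 : ((2^(m-1) : ℕ) : ℤ) = 2^(m-1) := by push_cast; ring
      omega
    · have h4 : ((r.toNat : ℤ) : ℝ) = (r : ℝ) := by
        congr 1; exact Int.toNat_of_nonneg hr0
      rw [hr]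
      congr 1
      push_cast at h4 ⊢
      rw [h4]


lemma exactLev_coe_congr {x y : ℝ} {m m' : ℕ} (hm : 1 ≤ m) (hm' : 1 ≤ m')
    (hx : ExactLev x m) (hy : ExactLev y m')
    (h : ((x : ℝ) : Circle𝕋) = ((y : ℝ) : Circle𝕋)) : m = m' := by
  obtain ⟨k, hk⟩ := (coe_eq_coe x y).mp h
  have := exactLev_add_int hm' hy k
  rw [← hk] at this
  exact exactLev_unique hx this

/-! dyadic closure -/

lemma isDyadic_int (k : ℤ) : IsDyadic (k : ℝ) := ⟨k, 0, by simp⟩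

lemma dyadic_add {x y : ℝ} (hx : IsDyadic x) (hy : IsDyadic y) : IsDyadic (x + y) := by
  obtain ⟨p, e, rfl⟩ := hx
  obtain ⟨q, f, rfl⟩ := hy
  refine ⟨p * 2^f + q * 2^e, e + f, ?_⟩
  have h1 : (0:ℝ) < 2^e := by positivity
  have h2 : (0:ℝ) < 2^f := by positivity
  push_cast
  rw [pow_add]
  field_simp
  try ring

lemma dyadic_neg {x : ℝ} (hx : IsDyadic x) : IsDyadic (-x) := by
  obtain ⟨p, e, rfl⟩ := hx
  exact ⟨-p, e, by push_cast; ring⟩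

lemma dyadic_sub {x y : ℝ} (hx : IsDyadic x) (hy : IsDyadic y) : IsDyadic (x - y) := by
  rw [sub_eq_add_neg]; exact dyadic_add hx (dyadic_neg hy)

lemma dyadic_mul {x y : ℝ} (hx : IsDyadic x) (hy : IsDyadic y) : IsDyadic (x * y) := by
  obtain ⟨p, e, rfl⟩ := hx
  obtain ⟨q, f, rfl⟩ := hy
  refine ⟨p * q, e + f, ?_⟩
  push_cast
  rw [pow_add]
  ring

lemma isDyadic_zpow2 (n : ℤ) : IsDyadic ((2:ℝ) ^ n) := by
  rcases le_or_gt 0 n with h | h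
  · lift n to ℕ using h
    refine ⟨2 ^ n, 0, ?_⟩
    rw [zpow_natCast]
    push_cast
    simp
  · refine ⟨1, (-n).toNat, ?_⟩
    have hn : ((-n).toNat : ℤ) = -n := Int.toNat_of_nonneg (by omega)
    have : (2:ℝ) ^ n = ((2:ℝ) ^ (-n).toNat)⁻¹ := by
      rw [← zpow_natCast (2:ℝ) (-n).toNat, hn, zpow_neg, inv_inv]
    rw [this]
    push_cast
    rw [one_div]

/-! pow2int -/

def Pow2Int (x : ℝ) (e : ℕ) : Prop := ∃ p : ℤ, x = (p : ℝ) / 2 ^ e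

lemma pow2Int_mono {x : ℝ} {e f : ℕ} (h : Pow2Int x e) (hef : e ≤ f) : Pow2Int x f := by
  obtain ⟨p, rfl⟩ := h
  refine ⟨p * 2 ^ (f - e), ?_⟩
  have hsplit : (2:ℝ) ^ f = 2 ^ e * 2 ^ (f - e) := by rw [← pow_add]; congr 1; omega
  have h1 : (0:ℝ) < 2 ^ e := by positivity
  have h2 : (0:ℝ) < 2 ^ (f - e) := by positivity
  rw [hsplit]
  push_cast
  field_simp

lemma pow2Int_one (e : ℕ) : Pow2Int 1 e := by
  refine ⟨2 ^ e, ?_⟩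
  have h1 : (0:ℝ) < 2 ^ e := by positivity
  push_cast
  rw [div_self h1.ne']

open Classical in
noncomputable def dex (x : ℝ) : ℕ :=
  if h : ∃ e, Pow2Int x e then h.choose else 0

lemma dex_spec {x : ℝ} (h : IsDyadic x) : Pow2Int x (dex x) := by
  have h' : ∃ e, Pow2Int x e := by
    obtain ⟨p, n, hp⟩ := h
    exact ⟨n, p, hp⟩
  rw [dex, dif_pos h']
  exact h'.choose_spec

/-! odd factor and existence of exact level -/

lemma nat_odd_factor : ∀ q : ℕ, 0 < q → ∃ k j : ℕ, Odd j ∧ q = 2 ^ k * j := by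
  intro q
  induction q using Nat.strong_induction_on with
  | _ q ih =>
    intro hq
    rcases Nat.even_or_odd q with he | ho
    · obtain ⟨r, hr⟩ := he
      have hr0 : 0 < r := by omega
      obtain ⟨k, j, hj, hkj⟩ := ih r (by omega) hr0
      refine ⟨k + 1, j, hj, ?_⟩
      have hx : 2 ^ (k+1) * j = 2 * (2 ^ k * j) := by ring
      omega
    · exact ⟨0, q, ho, by simp⟩

lemma exists_exactLev {a : ℝ} (hd : IsDyadic a) (ha : a ∈ Set.Ioo (0:ℝ) 1) :
    ∃ m : ℕ, ExactLev a m := by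
  obtain ⟨p, e, rfl⟩ := hd
  have h1 : (0:ℝ) < 2 ^ e := by positivity
  have hp0 : 0 < p := by
    by_contra h; push_neg at h
    have h2 : (p:ℝ) ≤ 0 := by exact_mod_cast h
    have : (p:ℝ) / 2^e ≤ 0 := div_nonpos_of_nonpos_of_nonneg h2 h1.le
    linarith [ha.1]
  obtain ⟨k, j, hj, hkj⟩ := nat_odd_factor p.toNat (by omega)
  have hpr : (p:ℝ) = 2 ^ k * j := by
    have : (p.toNat : ℝ) = (p : ℝ) := by exact_mod_cast Int.toNat_of_nonneg hp0.le
    rw [← this, hkj]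
    push_cast
    ring
  have hj1 : 1 ≤ j := by
    obtain ⟨r, hr⟩ := hj; omega
  by_cases hke : k ≤ e
  · refine ⟨e - k, j, ?_, ?_⟩
    · obtain ⟨r, hr⟩ := hj
      exact ⟨r, by push_cast; omega⟩
    · rw [hpr]
      have hsp : (2:ℝ) ^ e = 2 ^ k * 2 ^ (e - k) := by rw [← pow_add]; congr 1; omega
      rw [hsp, mul_div_mul_left _ _ (by positivity : (2:ℝ)^k ≠ 0)]
      push_cast
      ring
  · exfalso
    push_neg at hke
    have hsp : (2:ℝ) ^ k = 2 ^ (k - e) * 2 ^ e := by rw [← pow_add]; congr 1; omega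
    have hav : (p:ℝ) / 2 ^ e = 2 ^ (k - e) * j := by
      rw [hpr, hsp]
      field_simp
    have h2 : (2:ℝ) ≤ 2 ^ (k - e) := by
      calc (2:ℝ) = 2 ^ 1 := (pow_one 2).symm
      _ ≤ 2 ^ (k - e) := by
        apply pow_le_pow_right₀ (by norm_num)
        omega
    have h3 : (1:ℝ) ≤ (j:ℝ) := by exact_mod_cast hj1
    have := ha.2
    rw [hav] at this
    nlinarith

/-! fract -/

lemma exactLev_fract {x : ℝ} {m : ℕ} (hm : 1 ≤ m) (h : ExactLev x m) :
    ExactLev (Int.fract x) m ∧ Int.fract x ∈ Set.Ioo (0:ℝ) 1 := by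
  have h1 := exactLev_add_int hm h (-⌊x⌋)
  have heq : x + (-⌊x⌋ : ℤ) = Int.fract x := by
    rw [Int.fract]
    push_cast
    ring
  rw [heq] at h1
  refine ⟨h1, ?_, Int.fract_lt_one x⟩
  rcases lt_or_eq_of_le (Int.fract_nonneg x) with h2 | h2
  · exact h2
  · exfalso
    exact exactLev_ne_int hm h1 0 (by push_cast; exact h2.symm)

/-! power helper -/

lemma zpow_helper (n : ℤ) (m s : ℕ) (h : (m:ℤ) = n + s) :
    (2:ℝ) ^ n * (1 / 2 ^ m) = 1 / 2 ^ s := by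
  have h2 : (2:ℝ) ^ m = 2 ^ n * 2 ^ s := by
    rw [← zpow_natCast (2:ℝ) m, ← zpow_natCast (2:ℝ) s,
      ← zpow_add₀ (by norm_num : (2:ℝ) ≠ 0), show ((m:ℕ):ℤ) = n + (s:ℤ) from h]
  have h3 : (2:ℝ) ^ n ≠ 0 := zpow_ne_zero n (by norm_num)
  have h4 : (2:ℝ) ^ s ≠ 0 := by positivity
  rw [h2]
  field_simp


lemma gamma_symm {x y : Circle𝕋} (h : GammaAdj x y) : GammaAdj y x := by
  rcases h with ⟨n, hn, k, hk, h | h⟩ | h | h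
  · exact Or.inl ⟨n, hn, k, hk, Or.inr h⟩
  · exact Or.inl ⟨n, hn, k, hk, Or.inl h⟩
  · exact Or.inr (Or.inr ⟨h.1, h.2⟩)
  · exact Or.inr (Or.inl ⟨h.1, h.2⟩)

lemma adj_build {x : ℝ} {m : ℕ} (hm : 2 ≤ m) (h : ExactLev x m) {b : ℝ}
    (hb : b = x + 1/2^(m+1) ∨ b = x - 1/2^(m+1)) :
    GammaAdj ((x : ℝ) : Circle𝕋) ((b : ℝ) : Circle𝕋) := by
  obtain ⟨ha, hIoo⟩ := exactLev_fract (by omega) h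
  obtain ⟨_, _, _, k, hk, hkeq⟩ := exactLev_bounds ha hIoo
  set a := Int.fract x with hadef
  have hax : ((x : ℝ) : Circle𝕋) = ((a : ℝ) : Circle𝕋) := by
    refine ((coe_eq_coe x a).mpr ⟨⌊x⌋, ?_⟩).symm.symm
    rw [hadef, Int.fract]
    ring
  have hn1 : m - 1 + 1 = m := by omega
  have hn2 : m - 1 + 2 = m + 1 := by omega
  refine Or.inl ⟨m - 1, by omega, k, ?_, ?_⟩
  · have : m - 1 + 1 = m := by omega
    calc k < 2 ^ (m-1) := hk
    _ ≤ 2 ^ (m-1) := le_refl _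
  · left
    constructor
    · rw [hn1, ← hkeq, hax]
    · have hplus : a + 1/2^(m+1) = (4*(k:ℝ)+3)/2^(m+1) := by
        rw [hkeq]
        have hsp : (2:ℝ)^(m+1) = 2^m * 2 := by rw [pow_succ]
        rw [hsp]
        have h1 : (2:ℝ)^m ≠ 0 := by positivity
        field_simp
        ring
      have hminus : a - 1/2^(m+1) = (4*(k:ℝ)+1)/2^(m+1) := by
        rw [hkeq]
        have hsp : (2:ℝ)^(m+1) = 2^m * 2 := by rw [pow_succ]
        rw [hsp]
        have h1 : (2:ℝ)^m ≠ 0 := by positivity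
        field_simp
        ring
      rcases hb with hb | hb
      · right
        rw [hn2, ← hplus, hb]
        exact coe_shift ((coe_eq_coe x a).mpr ⟨⌊x⌋, by rw [hadef, Int.fract]; ring⟩) _
      · left
        rw [hn2, ← hminus, hb]
        have := coe_shift ((coe_eq_coe x a).mpr ⟨⌊x⌋, by rw [hadef, Int.fract]; ring⟩) (-(1/2^(m+1)))
        simpa [sub_eq_add_neg] using this

lemma coe_ne_zero_of_lev {w : ℝ} {s : ℕ} (hs : 2 ≤ s) (h : ExactLev w s) :
    ((w : ℝ) : Circle𝕋) ≠ (0 : Circle𝕋) := by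
  intro hc
  have h0 : ((0:ℝ) : Circle𝕋) = (0 : Circle𝕋) := by simp
  rw [← h0] at hc
  obtain ⟨k, hk⟩ := (coe_eq_coe w 0).mp hc
  exact exactLev_ne_int (by omega) h k (by rw [hk]; ring)

lemma coe_ne_half_of_lev {w : ℝ} {s : ℕ} (hs : 2 ≤ s) (h : ExactLev w s) :
    ((w : ℝ) : Circle𝕋) ≠ (((1/2 : ℝ) : ℝ) : Circle𝕋) := by
  intro hc
  obtain ⟨k, hk⟩ := (coe_eq_coe w (1/2)).mp hc
  exact exactLev_ne_half hs h k hk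


lemma phi_int {φ : ℝ → ℝ} (hT : ∀ x : ℝ, φ (x + 1) = φ x + 1) (x : ℝ) :
    ∀ k : ℤ, φ (x + k) = φ x + k := by
  intro k
  induction k using Int.induction_on with
  | zero => simp
  | succ n ih =>
    have h1 : x + ((n:ℤ) + 1 : ℤ) = (x + (n:ℤ)) + 1 := by push_cast; ring
    rw [h1, hT, ih]
    push_cast
    ring
  | pred n ih =>
    have hdown : ∀ y : ℝ, φ (y - 1) = φ y - 1 := by
      intro y
      have := hT (y - 1)
      simp only [sub_add_cancel] at this
      linarith
    have h5 : x + ((-(n:ℤ) - 1 : ℤ) : ℝ) = (x + ((-(n:ℤ) : ℤ) : ℝ)) - 1 := by push_cast; ring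
    rw [h5, hdown, ih]
    push_cast
    ring

lemma affine_closed (φ : ℝ → ℝ) (hcont : Continuous φ) (B : Finset ℝ)
    (hB01 : (↑B : Set ℝ) ⊆ Set.Ico (0:ℝ) 1)
    (hpiece : ∀ u v : ℝ, u < v → (∀ c ∈ B, ∀ k : ℤ, c + (k : ℝ) ∉ Set.Ioo u v) →
      ∃ n : ℤ, ∀ x ∈ Set.Ioo u v, ∀ y ∈ Set.Ioo u v, φ x - φ y = (2 : ℝ) ^ n * (x - y))
    (u v : ℝ) (huv : u < v) (hsub : Set.Ioo u v ⊆ Set.Ioo 0 1)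
    (hfree : ∀ b ∈ B, b ∉ Set.Ioo u v) :
    ∃ n : ℤ, ∀ x ∈ Set.Icc u v, φ x = φ u + 2 ^ n * (x - u) := by
  obtain ⟨n, hn⟩ := hpiece u v huv (by
    intro c hc k hk
    have h01 := hsub hk
    have hc01 := hB01 hc
    have hk0 : k = 0 := by
      have h1 := h01.1
      have h2 := h01.2
      have h3 := hc01.1
      have h4 := hc01.2
      have h5 : (-1:ℝ) < (k:ℝ) := by linarith
      have h6 : ((k:ℝ)) < 1 := by linarith
      have h7 : (-1:ℤ) < k := by exact_mod_cast h5
      have h8 : k < 1 := by exact_mod_cast h6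
      omega
    rw [hk0] at hk
    simp only [Int.cast_zero, add_zero] at hk
    exact hfree c hc hk)
  refine ⟨n, ?_⟩
  set w := (u + v)/2 with hw
  have hwm : w ∈ Set.Ioo u v := ⟨by rw [hw]; linarith, by rw [hw]; linarith⟩
  set ψ : ℝ → ℝ := fun x => φ x - 2 ^ n * x with hψ
  have hconst : Set.EqOn ψ (fun _ => ψ w) (Set.Ioo u v) := by
    intro x hx
    have h := hn x hx w hwm
    simp only [hψ]
    have hexp : (2:ℝ)^n * (x - w) = 2^n * x - 2^n * w := by ring
    rw [hexp] at h
    linarith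
  have hcψ : Continuous ψ := hcont.sub (continuous_const.mul continuous_id)
  have hclos := hconst.closure hcψ continuous_const
  rw [closure_Ioo huv.ne] at hclos
  intro x hx
  have h1 := hclos hx
  have h2 := hclos (Set.left_mem_Icc.mpr huv.le)
  simp only [hψ] at h1 h2
  have hexp : (2:ℝ)^n * (x - u) = 2^n * x - 2^n * u := by ring
  rw [hexp]
  linarith


set_option maxHeartbeats 2000000 in
lemma key (φ : ℝ → ℝ) (h : IsPDALift φ) :
    ∃ L : ℕ, 3 ≤ L ∧ ∀ (m : ℕ) (a : ℝ), a ∈ Set.Ioo (0:ℝ) 1 → ExactLev a m → L < m →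
      ∃ s : ℕ, 2 ≤ s ∧ ExactLev (φ a) s ∧
        φ (a + 1/2^(m+1)) = φ a + 1/2^(s+1) ∧
        φ (a - 1/2^(m+1)) = φ a - 1/2^(s+1) := by
  classical
  obtain ⟨hmono, hsurj, hT, hφ0, B, hB01, hBdy, hpiece⟩ := h
  have hcont : Continuous φ := (StrictMono.orderIsoOfSurjective φ hmono hsurj).continuous
  set C : Finset ℝ := insert 0 B with hC
  have h0C : (0:ℝ) ∈ C := Finset.mem_insert_self _ _
  have hC01 : ∀ c ∈ C, 0 ≤ c ∧ c < 1 := by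
    intro c hc
    rcases Finset.mem_insert.mp hc with rfl | hc
    · norm_num
    · exact ⟨(hB01 (Finset.mem_coe.mpr hc)).1, (hB01 (Finset.mem_coe.mpr hc)).2⟩
  have hCdy : ∀ c ∈ C, IsDyadic c := by
    intro c hc
    rcases Finset.mem_insert.mp hc with rfl | hc
    · exact ⟨0, 0, by norm_num⟩
    · exact hBdy c hc
  have hne : ∀ c : ℝ, ((C.filter (fun x => c < x)) ∪ {(1:ℝ)}).Nonempty :=
    fun c => ⟨1, Finset.mem_union_right _ (Finset.mem_singleton_self 1)⟩
  set nxt : ℝ → ℝ := fun c => ((C.filter (fun x => c < x)) ∪ {(1:ℝ)}).min' (hne c) with hnxt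
  have hnxt_mem : ∀ c : ℝ, nxt c ∈ (C.filter (fun x => c < x)) ∪ {(1:ℝ)} := by
    intro c
    simp only [hnxt]
    exact Finset.min'_mem _ (hne c)
  have hnxt_min : ∀ c x : ℝ, x ∈ (C.filter (fun y => c < y)) ∪ {(1:ℝ)} → nxt c ≤ x := by
    intro c x hx
    simp only [hnxt]
    exact Finset.min'_le _ _ hx
  have hnxt_gt : ∀ c ∈ C, c < nxt c := by
    intro c hc
    rcases Finset.mem_union.mp (hnxt_mem c) with h | h
    · exact (Finset.mem_filter.mp h).2
    · rw [Finset.mem_singleton] at h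
      rw [h]
      exact (hC01 c hc).2
  have hnxt_le1 : ∀ c : ℝ, nxt c ≤ 1 :=
    fun c => hnxt_min c 1 (Finset.mem_union_right _ (Finset.mem_singleton_self 1))
  have hnxt_free : ∀ c : ℝ, ∀ b ∈ B, b ∉ Set.Ioo c (nxt c) := by
    intro c b hb hmem
    have hbC : b ∈ C.filter (fun x => c < x) :=
      Finset.mem_filter.mpr ⟨Finset.mem_insert_of_mem hb, hmem.1⟩
    exact absurd hmem.2 (not_lt.mpr (hnxt_min c b (Finset.mem_union_left _ hbC)))
  have hIoo_sub : ∀ c ∈ C, Set.Ioo c (nxt c) ⊆ Set.Ioo (0:ℝ) 1 := by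
    intro c hc x hx
    exact ⟨lt_of_le_of_lt (hC01 c hc).1 hx.1, lt_of_lt_of_le hx.2 (hnxt_le1 c)⟩
  have hex : ∀ c ∈ C, ∃ n : ℤ, ∀ x ∈ Set.Icc c (nxt c), φ x = φ c + 2^n * (x - c) :=
    fun c hc => affine_closed φ hcont B hB01 hpiece c (nxt c) (hnxt_gt c hc)
      (hIoo_sub c hc) (hnxt_free c)
  set slp : ℝ → ℤ := fun c =>
    if h : ∃ n : ℤ, ∀ x ∈ Set.Icc c (nxt c), φ x = φ c + 2^n * (x - c) then h.choose else 0
    with hslpdef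
  have hslp : ∀ c ∈ C, ∀ x ∈ Set.Icc c (nxt c), φ x = φ c + 2^(slp c) * (x - c) := by
    intro c hc
    have h := hex c hc
    simp only [hslpdef, dif_pos h]
    exact h.choose_spec
  -- φ dyadic on C
  have hφC : ∀ K : ℕ, ∀ c ∈ C, (C.filter (fun x => x < c)).card ≤ K → IsDyadic (φ c) := by
    intro K
    induction K with
    | zero =>
      intro c hc hcard
      by_cases h0 : c = 0
      · rw [h0]; exact hφ0
      · exfalso
        have hc0 : (0:ℝ) < c := lt_of_le_of_ne (hC01 c hc).1 (Ne.symm h0)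
        have hmem : (0:ℝ) ∈ C.filter (fun x => x < c) := Finset.mem_filter.mpr ⟨h0C, hc0⟩
        have := Finset.card_pos.mpr ⟨(0:ℝ), hmem⟩
        omega
    | succ K ih =>
      intro c hc hcard
      by_cases h0 : c = 0
      · rw [h0]; exact hφ0
      have hc0 : (0:ℝ) < c := lt_of_le_of_ne (hC01 c hc).1 (Ne.symm h0)
      have hSne : (C.filter (fun x => x < c)).Nonempty := ⟨0, Finset.mem_filter.mpr ⟨h0C, hc0⟩⟩
      set c₀ := (C.filter (fun x => x < c)).max' hSne with hc₀def
      have hc₀mem := Finset.max'_mem _ hSne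
      have hc₀C : c₀ ∈ C := (Finset.mem_filter.mp hc₀mem).1
      have hc₀lt : c₀ < c := (Finset.mem_filter.mp hc₀mem).2
      have hfree : ∀ b ∈ B, b ∉ Set.Ioo c₀ c := by
        intro b hb hmem
        have hbS : b ∈ C.filter (fun x => x < c) :=
          Finset.mem_filter.mpr ⟨Finset.mem_insert_of_mem hb, hmem.2⟩
        exact absurd hmem.1 (not_lt.mpr (Finset.le_max' _ _ hbS))
      have hsub : Set.Ioo c₀ c ⊆ Set.Ioo 0 1 := by
        intro x hx
        exact ⟨lt_of_le_of_lt (hC01 c₀ hc₀C).1 hx.1, lt_trans hx.2 (hC01 c hc).2⟩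
      obtain ⟨n, hn⟩ := affine_closed φ hcont B hB01 hpiece c₀ c hc₀lt hsub hfree
      have hφc := hn c (Set.right_mem_Icc.mpr hc₀lt.le)
      have hsubset : C.filter (fun x => x < c₀) ⊆ C.filter (fun x => x < c) := by
        intro x hx
        obtain ⟨hxC, hxlt⟩ := Finset.mem_filter.mp hx
        exact Finset.mem_filter.mpr ⟨hxC, hxlt.trans hc₀lt⟩
      have hcards : (C.filter (fun x => x < c₀)).card < (C.filter (fun x => x < c)).card := by
        apply Finset.card_lt_card
        rw [Finset.ssubset_iff_of_subset hsubset]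
        exact ⟨c₀, hc₀mem, by simp⟩
      have hIH := ih c₀ hc₀C (by omega)
      rw [hφc]
      exact dyadic_add hIH (dyadic_mul (isDyadic_zpow2 n) (dyadic_sub (hCdy c hc) (hCdy c₀ hc₀C)))
  have hφCdy : ∀ c ∈ C, IsDyadic (φ c) :=
    fun c hc => hφC (C.filter (fun x => x < c)).card c hc le_rfl
  set M : ℕ := C.sup (fun c => max (dex c) (dex (φ c))) with hM
  have hMC : ∀ c ∈ C, Pow2Int c M ∧ Pow2Int (φ c) M := by
    intro c hc
    have h1 : max (dex c) (dex (φ c)) ≤ M := by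
      rw [hM]; exact Finset.le_sup (f := fun c => max (dex c) (dex (φ c))) hc
    exact ⟨pow2Int_mono (dex_spec (hCdy c hc)) (le_trans (le_max_left _ _) h1),
      pow2Int_mono (dex_spec (hφCdy c hc)) (le_trans (le_max_right _ _) h1)⟩
  set N : ℕ := C.sup (fun c => (slp c).natAbs) with hN
  have hNC : ∀ c ∈ C, (slp c).natAbs ≤ N := by
    intro c hc
    rw [hN]
    exact Finset.le_sup (f := fun c => (slp c).natAbs) hc
  refine ⟨M + 2*N + 3, by omega, ?_⟩
  intro m a ha hlev hLm
  have hPne : (C.filter (fun x => x ≤ a)).Nonempty := ⟨0, Finset.mem_filter.mpr ⟨h0C, ha.1.le⟩⟩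
  set c := (C.filter (fun x => x ≤ a)).max' hPne with hcdef
  have hcmem := Finset.max'_mem _ hPne
  have hcC : c ∈ C := (Finset.mem_filter.mp hcmem).1
  have hca : c ≤ a := (Finset.mem_filter.mp hcmem).2
  have hanxt : a < nxt c := by
    by_contra hcon
    push_neg at hcon
    rcases Finset.mem_union.mp (hnxt_mem c) with h | h
    · obtain ⟨hC', hgt⟩ := Finset.mem_filter.mp h
      have hle : nxt c ≤ c := by
        rw [hcdef]
        exact Finset.le_max' (C.filter (fun x => x ≤ a)) (nxt c)
          (Finset.mem_filter.mpr ⟨hC', hcon⟩)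
      exact absurd hgt (not_lt.mpr hle)
    · rw [Finset.mem_singleton] at h
      rw [h] at hcon
      exact absurd ha.2 (not_lt.mpr hcon)
  obtain ⟨j, hjodd, hjeq⟩ := hlev
  obtain ⟨p, hp⟩ := (hMC c hcC).1
  obtain ⟨q, hq⟩ := (hMC c hcC).2
  have haffine := hslp c hcC
  set n := slp c with hndef
  have hnN : n.natAbs ≤ N := hNC c hcC
  have hnNZ : ((n.natAbs : ℕ) : ℤ) ≤ (N : ℤ) := by exact_mod_cast hnN
  have hMm : M < m := by omega
  have hNm : N < m := by omega
  set s := ((m:ℤ) - n).toNat with hsdef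
  have hsZ : (s:ℤ) = (m:ℤ) - n := Int.toNat_of_nonneg (by omega)
  have hs_lb : M + N + 3 ≤ s := by omega
  have hs2 : 2 ≤ s := by omega
  have hds : (2:ℝ)^n * (1/2^(m+1)) = 1/2^(s+1) := zpow_helper n (m+1) (s+1) (by push_cast; omega)
  have hda : (2:ℝ)^n * (1/2^m) = 1/2^s := zpow_helper n m s (by push_cast; omega)
  have h2m : (0:ℝ) < 2^m := by positivity
  have h2m1 : (0:ℝ) < 2^(m+1) := by positivity
  have hhalf : (1:ℝ)/2^(m+1) + 1/2^(m+1) = 1/2^m := by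
    rw [pow_succ]
    field_simp
    ring
  have hsplitM : (2:ℝ)^m = 2^(m-M) * 2^M := by rw [← pow_add]; congr 1; omega
  have hsplitMZ : (2:ℤ)^(m-M) = 2^(m-M-1) * 2 := by rw [← pow_succ]; congr 1; omega
  -- lower bound a - c
  have hac : 1/2^m ≤ a - c := by
    have hKint : (2:ℝ)^m * (a - c) = ((j - p * 2^(m-M) : ℤ) : ℝ) := by
      rw [hjeq, hp]
      push_cast
      rw [mul_sub]
      congr 1
      · field_simp
      · rw [hsplitM]
        have h2M : (2:ℝ)^M ≠ 0 := by positivity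
        field_simp
    have hKodd : Odd (j - p * 2^(m-M)) := by
      obtain ⟨r, hr⟩ := hjodd
      refine ⟨r - p * 2^(m-M-1), ?_⟩
      have hmul : p * 2^(m-M) = 2*(p * 2^(m-M-1)) := by rw [hsplitMZ]; ring
      omega
    have hK0 : (0:ℤ) ≤ j - p * 2^(m-M) := by
      have h1 : (0:ℝ) ≤ 2^m * (a - c) := mul_nonneg h2m.le (by linarith)
      rw [hKint] at h1
      exact_mod_cast h1
    have hK1 : (1:ℤ) ≤ j - p * 2^(m-M) := by
      rcases hKodd with ⟨r, hr⟩
      omega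
    have h2 : (1:ℝ) ≤ ((j - p * 2^(m-M) : ℤ) : ℝ) := by exact_mod_cast hK1
    rw [← hKint] at h2
    rw [div_le_iff₀ h2m]
    nlinarith
  -- lower bound nxt c - a
  have hnxtM : Pow2Int (nxt c) M := by
    rcases Finset.mem_union.mp (hnxt_mem c) with h | h
    · exact (hMC (nxt c) (Finset.mem_filter.mp h).1).1
    · rw [Finset.mem_singleton] at h
      rw [h]
      exact pow2Int_one M
  have hcna : 1/2^m ≤ nxt c - a := by
    obtain ⟨p', hp'⟩ := hnxtM
    have hKint : (2:ℝ)^m * (nxt c - a) = ((p' * 2^(m-M) - j : ℤ) : ℝ) := by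
      rw [hjeq, hp']
      push_cast
      rw [mul_sub]
      congr 1
      · rw [hsplitM]
        have h2M : (2:ℝ)^M ≠ 0 := by positivity
        field_simp
      · field_simp
    have hKodd : Odd (p' * 2^(m-M) - j) := by
      obtain ⟨r, hr⟩ := hjodd
      refine ⟨p' * 2^(m-M-1) - r - 1, ?_⟩
      have hmul : p' * 2^(m-M) = 2*(p' * 2^(m-M-1)) := by rw [hsplitMZ]; ring
      omega
    have hK0 : (0:ℤ) ≤ p' * 2^(m-M) - j := by
      have h1 : (0:ℝ) ≤ 2^m * (nxt c - a) := mul_nonneg h2m.le (by linarith)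
      rw [hKint] at h1
      exact_mod_cast h1
    have hK1 : (1:ℤ) ≤ p' * 2^(m-M) - j := by
      rcases hKodd with ⟨r, hr⟩
      omega
    have h2 : (1:ℝ) ≤ ((p' * 2^(m-M) - j : ℤ) : ℝ) := by exact_mod_cast hK1
    rw [← hKint] at h2
    rw [div_le_iff₀ h2m]
    nlinarith
  have hδpos : (0:ℝ) < 1/2^(m+1) := by positivity
  have hδlt : (1:ℝ)/2^(m+1) < 1/2^m := by linarith
  have hmemp : a + 1/2^(m+1) ∈ Set.Icc c (nxt c) :=
    ⟨by linarith, by linarith⟩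
  have hmemm : a - 1/2^(m+1) ∈ Set.Icc c (nxt c) :=
    ⟨by linarith, by linarith⟩
  have hmema : a ∈ Set.Icc c (nxt c) := ⟨hca, hanxt.le⟩
  have hfa := haffine a hmema
  have hfp := haffine (a + 1/2^(m+1)) hmemp
  have hfm := haffine (a - 1/2^(m+1)) hmemm
  have hφplus : φ (a + 1/2^(m+1)) = φ a + 1/2^(s+1) := by
    rw [hfp, hfa]
    have hre : (2:ℝ)^n * (a + 1/2^(m+1) - c) = 2^n * (a - c) + 2^n*(1/2^(m+1)) := by ring
    rw [hre, hds]
    ring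
  have hφminus : φ (a - 1/2^(m+1)) = φ a - 1/2^(s+1) := by
    rw [hfm, hfa]
    have hre : (2:ℝ)^n * (a - 1/2^(m+1) - c) = 2^n * (a - c) - 2^n*(1/2^(m+1)) := by ring
    rw [hre, hds]
    ring
  -- exact level of φ a
  set t : ℕ := (n + N).toNat with htdef
  have htZ : (t:ℤ) = n + N := Int.toNat_of_nonneg (by omega)
  have h2pow : (2:ℝ)^n * (2:ℝ)^N = 2^t := by
    rw [← zpow_natCast (2:ℝ) N, ← zpow_natCast (2:ℝ) t,
      ← zpow_add₀ (by norm_num : (2:ℝ) ≠ 0)]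
    congr 1
    omega
  obtain ⟨r, hr⟩ : ∃ r : ℤ, φ c - 2^n * c = (r:ℝ)/2^(M+N) := by
    refine ⟨q * 2^N - p * 2^t, ?_⟩
    have h2M : (2:ℝ)^M ≠ 0 := by positivity
    have h2N : (2:ℝ)^N ≠ 0 := by positivity
    have hMN : (2:ℝ)^(M+N) = 2^M * 2^N := by rw [pow_add]
    rw [hq, hp, hMN, eq_div_iff (by positivity : (2:ℝ)^M * (2:ℝ)^N ≠ 0)]
    push_cast
    rw [← h2pow]
    field_simp
  have hlevφ : ExactLev (φ a) s := by
    set u : ℕ := s - (M+N) with hudef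
    have hu1 : 1 ≤ u := by omega
    refine ⟨j + r * 2^u, ?_, ?_⟩
    · obtain ⟨w, hw⟩ := hjodd
      refine ⟨w + r * 2^(u-1), ?_⟩
      have hsp : (2:ℤ)^u = 2^(u-1)*2 := by rw [← pow_succ]; congr 1; omega
      have hmul : r * 2^u = 2*(r * 2^(u-1)) := by rw [hsp]; ring
      omega
    · rw [hfa]
      have hrearr : φ c + 2^n * (a - c) = (φ c - 2^n * c) + 2^n * a := by ring
      rw [hrearr, hr, hjeq]
      have h2na : (2:ℝ)^n * ((j:ℝ)/2^m) = (j:ℝ)/2^s := by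
        calc (2:ℝ)^n * ((j:ℝ)/2^m) = (j:ℝ) * ((2:ℝ)^n * (1/2^m)) := by ring
        _ = (j:ℝ) * (1/2^s) := by rw [hda]
        _ = (j:ℝ)/2^s := by ring
      rw [h2na]
      have hssplit : (2:ℝ)^s = 2^(M+N) * 2^u := by rw [← pow_add]; congr 1; omega
      have h2MN : (2:ℝ)^(M+N) ≠ 0 := by positivity
      have h2u : (2:ℝ)^u ≠ 0 := by positivity
      rw [hssplit]
      push_cast
      field_simp
      ring
  exact ⟨s, hs2, hlevφ, hφplus, hφminus⟩


lemma back_core {φ : ℝ → ℝ} (hmono : StrictMono φ) (hT : ∀ x : ℝ, φ (x + 1) = φ x + 1)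
    {a b : ℝ} {m : ℕ} (ha : a ∈ Set.Ioo (0:ℝ) 1) (hb : b ∈ Set.Ioo (0:ℝ) 1)
    (hlev : ExactLev a m) (hm : 2 ≤ m) {s : ℕ}
    (hplus : φ (a + 1/2^(m+1)) = φ a + 1/2^(s+1))
    (hminus : φ (a - 1/2^(m+1)) = φ a - 1/2^(s+1))
    (heq : ((φ b : ℝ) : Circle𝕋) = ((φ a + 1/2^(s+1) : ℝ) : Circle𝕋) ∨
           ((φ b : ℝ) : Circle𝕋) = ((φ a - 1/2^(s+1) : ℝ) : Circle𝕋)) :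
    GammaAdj ((a : ℝ) : Circle𝕋) ((b : ℝ) : Circle𝕋) := by
  obtain ⟨hm1, hlb, hub, _⟩ := exactLev_bounds hlev ha
  have h2m : (0:ℝ) < 2^m := by positivity
  have hδ : (0:ℝ) < 1/2^(m+1) := by positivity
  have hδlt : (1:ℝ)/2^(m+1) < 1/2^m := by
    have hhalf : (1:ℝ)/2^(m+1) + 1/2^(m+1) = 1/2^m := by
      rw [pow_succ]
      field_simp
      ring
    linarith
  rcases heq with heq | heq
  · obtain ⟨k, hk⟩ := (coe_eq_coe _ _).mp heq
    have h2 : φ b = φ (a + 1/2^(m+1) + k) := by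
      rw [phi_int hT _ k, hplus]
      linarith
    have h3 : b = a + 1/2^(m+1) + k := hmono.injective h2
    have hk0 : k = 0 := by
      have h4 : (-1:ℝ) < (k:ℝ) := by linarith [hb.2, hb.1]
      have h5 : ((k:ℝ)) < 1 := by linarith [hb.2, hb.1]
      have h6 : (-1:ℤ) < k := by exact_mod_cast h4
      have h7 : k < 1 := by exact_mod_cast h5
      omega
    rw [hk0] at h3
    push_cast at h3
    exact adj_build hm hlev (Or.inl (by rw [h3]; ring))
  · obtain ⟨k, hk⟩ := (coe_eq_coe _ _).mp heq
    have h2 : φ b = φ (a - 1/2^(m+1) + k) := by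
      rw [phi_int hT _ k, hminus]
      linarith
    have h3 : b = a - 1/2^(m+1) + k := hmono.injective h2
    have hk0 : k = 0 := by
      have h4 : (-1:ℝ) < (k:ℝ) := by linarith [hb.2, hb.1]
      have h5 : ((k:ℝ)) < 1 := by linarith [hb.2, hb.1]
      have h6 : (-1:ℤ) < k := by exact_mod_cast h4
      have h7 : k < 1 := by exact_mod_cast h5
      omega
    rw [hk0] at h3
    push_cast at h3
    exact adj_build hm hlev (Or.inr (by rw [h3]; ring))


lemma fwd_core {φ : ℝ → ℝ} {a b : ℝ} {m s : ℕ} (ha : a ∈ Set.Ioo (0:ℝ) 1)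
    (hb : b ∈ Set.Ioo (0:ℝ) 1) (hlev : ExactLev a m)
    (hs2 : 2 ≤ s) (hslev : ExactLev (φ a) s)
    (hplus : φ (a + 1/2^(m+1)) = φ a + 1/2^(s+1))
    (hminus : φ (a - 1/2^(m+1)) = φ a - 1/2^(s+1))
    (heq : ((b:ℝ):Circle𝕋) = ((a + 1/2^(m+1) : ℝ):Circle𝕋) ∨
           ((b:ℝ):Circle𝕋) = ((a - 1/2^(m+1) : ℝ):Circle𝕋)) :
    GammaAdj ((φ a : ℝ):Circle𝕋) ((φ b : ℝ):Circle𝕋) := by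
  obtain ⟨hm1, hlb, hub, _⟩ := exactLev_bounds hlev ha
  have h2m : (0:ℝ) < 2^m := by positivity
  have hδ : (0:ℝ) < 1/2^(m+1) := by positivity
  have hδlt : (1:ℝ)/2^(m+1) < 1/2^m := by
    have hhalf : (1:ℝ)/2^(m+1) + 1/2^(m+1) = 1/2^m := by
      rw [pow_succ]
      field_simp
      ring
    linarith
  rcases heq with heq | heq
  · obtain ⟨k, hk⟩ := (coe_eq_coe _ _).mp heq
    have hk0 : k = 0 := by
      have h4 : (-1:ℝ) < (k:ℝ) := by linarith [hb.2, hb.1]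
      have h5 : ((k:ℝ)) < 1 := by linarith [hb.2, hb.1]
      have h6 : (-1:ℤ) < k := by exact_mod_cast h4
      have h7 : k < 1 := by exact_mod_cast h5
      omega
    have h3 : b = a + 1/2^(m+1) := by rw [hk0] at hk; simpa using hk
    rw [h3, hplus]
    exact adj_build hs2 hslev (Or.inl rfl)
  · obtain ⟨k, hk⟩ := (coe_eq_coe _ _).mp heq
    have hk0 : k = 0 := by
      have h4 : (-1:ℝ) < (k:ℝ) := by linarith [hb.2, hb.1]
      have h5 : ((k:ℝ)) < 1 := by linarith [hb.2, hb.1]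
      have h6 : (-1:ℤ) < k := by exact_mod_cast h4
      have h7 : k < 1 := by exact_mod_cast h5
      omega
    have h3 : b = a - 1/2^(m+1) := by rw [hk0] at hk; simpa using hk
    rw [h3, hminus]
    exact adj_build hs2 hslev (Or.inr rfl)

end ThompsonAux

open ThompsonAux in
set_option maxHeartbeats 2000000 in
theorem thompson_piecewise_graph_aut (g : Homeomorph Circle𝕋 Circle𝕋) (hg : IsPDA g) :
    ∃ F : Set Circle𝕋, F.Finite ∧ F ⊆ dyadicPoints ∧
      ∀ u ∈ dyadicPoints \ F, ∀ v ∈ dyadicPoints \ F,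
        (GammaAdj u v ↔ GammaAdj (g u) (g v)) := by
  classical
  obtain ⟨φ, hlift, hgφ⟩ := hg
  have hmono : StrictMono φ := hlift.1
  have hT : ∀ x : ℝ, φ (x + 1) = φ x + 1 := hlift.2.2.1
  obtain ⟨L, hL3, hkey⟩ := key φ hlift
  set F : Set Circle𝕋 :=
    (fun r : ℝ => ((r : ℝ) : Circle𝕋)) '' {x : ℝ | x ∈ Set.Ico (0:ℝ) 1 ∧ ∃ p : ℤ, x = (p:ℝ)/2^L}
    with hF
  have h2L : (0:ℝ) < 2^L := by positivity
  have hSfin : Set.Finite {x : ℝ | x ∈ Set.Ico (0:ℝ) 1 ∧ ∃ p : ℤ, x = (p:ℝ)/2^L} := by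
    apply Set.Finite.subset (Set.Finite.image (fun p : ℤ => (p:ℝ)/2^L) (Set.finite_Icc (0:ℤ) (2^L)))
    rintro x ⟨hx, p, rfl⟩
    refine ⟨p, ?_, rfl⟩
    have hpr : (p:ℝ) = ((p:ℝ)/2^L)*2^L := by field_simp
    simp only [Set.mem_Icc]
    constructor
    · have : (0:ℝ) ≤ (p:ℝ) := by nlinarith [hx.1]
      exact_mod_cast this
    · have h1 : (p:ℝ) < 2^L := by nlinarith [hx.2]
      have h2 : (p:ℝ) ≤ 2^L := h1.le
      exact_mod_cast (by push_cast; exact h2 : (p:ℝ) ≤ ((2:ℤ)^L : ℤ))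
  have hmemF : ∀ (x : ℝ) (m' : ℕ), x ∈ Set.Ico (0:ℝ) 1 → (∃ p:ℤ, x = (p:ℝ)/2^m') → m' ≤ L →
      ((x:ℝ):Circle𝕋) ∈ F := by
    rintro x m' hx ⟨p, rfl⟩ hm'
    refine ⟨(p:ℝ)/2^m', ⟨hx, ⟨p * 2^(L-m'), ?_⟩⟩, rfl⟩
    have hsp : (2:ℝ)^L = 2^m' * 2^(L-m') := by rw [← pow_add]; congr 1; omega
    have h1 : (2:ℝ)^m' ≠ 0 := by positivity
    have h2 : (2:ℝ)^(L-m') ≠ 0 := by positivity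
    rw [hsp]
    push_cast
    field_simp
  have hrep : ∀ u, u ∈ dyadicPoints \ F → ∃ (aa : ℝ) (mm : ℕ), aa ∈ Set.Ioo (0:ℝ) 1 ∧
      ExactLev aa mm ∧ L < mm ∧ u = ((aa : ℝ) : Circle𝕋) := by
    rintro u ⟨⟨r, hrdy, rfl⟩, huF⟩
    set aa := Int.fract r with haa
    have hufr : ((r:ℝ):Circle𝕋) = ((aa:ℝ):Circle𝕋) :=
      (coe_eq_coe r aa).mpr ⟨⌊r⌋, by rw [haa, Int.fract]; ring⟩
    have haady : IsDyadic aa := by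
      rw [haa, Int.fract]
      exact dyadic_sub hrdy (isDyadic_int ⌊r⌋)
    have haaIco : aa ∈ Set.Ico (0:ℝ) 1 := ⟨Int.fract_nonneg r, Int.fract_lt_one r⟩
    have haane : aa ≠ 0 := by
      intro h0
      apply huF
      rw [hufr, h0]
      exact hmemF 0 0 (by norm_num) ⟨0, by norm_num⟩ (by omega)
    have haaIoo : aa ∈ Set.Ioo (0:ℝ) 1 := ⟨lt_of_le_of_ne haaIco.1 (Ne.symm haane), haaIco.2⟩
    obtain ⟨mm, hmm⟩ := exists_exactLev haady haaIoo
    refine ⟨aa, mm, haaIoo, hmm, ?_, hufr⟩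
    by_contra hcon
    push_neg at hcon
    apply huF
    rw [hufr]
    obtain ⟨j, _, hje⟩ := hmm
    exact hmemF aa mm haaIco ⟨j, hje⟩ hcon
  -- basic facts about the standard parent point
  have hx0fact : ∀ n' k' : ℕ, 1 ≤ n' → k' < 2^n' →
      ((2*(k':ℝ)+1)/2^(n'+1)) ∈ Set.Ioo (0:ℝ) 1 ∧ ExactLev ((2*(k':ℝ)+1)/2^(n'+1)) (n'+1) := by
    intro n' k' hn' hk'
    have h2n : (0:ℝ) < 2^(n'+1) := by positivity
    have hkr : (k':ℝ) + 1 ≤ 2^n' := by exact_mod_cast hk'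
    have hnum : (0:ℝ) < 2*(k':ℝ)+1 := by positivity
    have hlt : 2*(k':ℝ)+1 < 2^(n'+1) := by
      rw [pow_succ]
      linarith
    constructor
    · exact ⟨by positivity, by rw [div_lt_one h2n]; exact hlt⟩
    · exact ⟨2*(k':ℤ)+1, ⟨k', by ring⟩, by push_cast; ring⟩
  -- main
  refine ⟨F, Set.Finite.image _ hSfin, ?_, ?_⟩
  · rintro x ⟨y, ⟨hy01, p, rfl⟩, rfl⟩
    exact ⟨(p:ℝ)/2^L, ⟨p, L, rfl⟩, rfl⟩
  intro u hu v hv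
  obtain ⟨a, ma, haIoo, haLev, haL, hua⟩ := hrep u hu
  obtain ⟨b, mb, hbIoo, hbLev, hbL, hvb⟩ := hrep v hv
  obtain ⟨sa, hsa2, hsaLev, hsaP, hsaM⟩ := hkey ma a haIoo haLev haL
  obtain ⟨sb, hsb2, hsbLev, hsbP, hsbM⟩ := hkey mb b hbIoo hbLev hbL
  have hGu : g u = ((φ a : ℝ) : Circle𝕋) := by rw [hua]; exact hgφ a
  have hGv : g v = ((φ b : ℝ) : Circle𝕋) := by rw [hvb]; exact hgφ b
  have harith : ∀ n' k' : ℕ,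
      (4*(k':ℝ)+1)/2^(n'+2) = (2*(k':ℝ)+1)/2^(n'+1) - 1/2^(n'+2) ∧
      (4*(k':ℝ)+3)/2^(n'+2) = (2*(k':ℝ)+1)/2^(n'+1) + 1/2^(n'+2) := by
    intro n' k'
    have h1 : (2:ℝ)^(n'+2) = 2^(n'+1) * 2 := by rw [pow_succ]
    have h2 : (2:ℝ)^(n'+1) ≠ 0 := by positivity
    constructor <;> (rw [h1]; field_simp; ring)
  constructor
  · -- forward
    intro hadj
    rcases hadj with ⟨n', hn', k', hk', ⟨hux, hvy⟩ | ⟨hvx, huy⟩⟩ | ⟨hu0, hvh⟩ | ⟨hv0, huh⟩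
    · -- u is parent
      obtain ⟨hxIoo, hxLev⟩ := hx0fact n' k' hn' hk'
      have hLn : L < n' + 1 := by
        by_contra hcon
        push_neg at hcon
        exact hu.2 (hua ▸ (by
          rw [hua] at hux
          rw [hux]
          exact hmemF _ (n'+1) ⟨hxIoo.1.le, hxIoo.2⟩
            ⟨2*(k':ℤ)+1, by push_cast; ring⟩ hcon))
      have hax : ((a:ℝ):Circle𝕋) = (((2*(k':ℝ)+1)/2^(n'+1) : ℝ):Circle𝕋) := hua ▸ hux
      have hma : ma = n' + 1 := exactLev_coe_congr (by omega) (by omega) haLev hxLev hax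
      rw [hGu, hGv]
      have hshift : ∀ d : ℝ, (((2*(k':ℝ)+1)/2^(n'+1) + d : ℝ):Circle𝕋) = ((a + d : ℝ):Circle𝕋) :=
        fun d => coe_shift hax.symm d
      have hss : n' + 2 = ma + 1 := by omega
      have heq : ((b:ℝ):Circle𝕋) = ((a + 1/2^(ma+1) : ℝ):Circle𝕋) ∨
          ((b:ℝ):Circle𝕋) = ((a - 1/2^(ma+1) : ℝ):Circle𝕋) := by
        have hd1 := (harith n' k').1
        have hd2 := (harith n' k').2
        rcases hvy with hvy | hvy
        · right
          rw [← hvb, hvy, hd1, hss, sub_eq_add_neg, sub_eq_add_neg]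
          exact hshift _
        · left
          rw [← hvb, hvy, hd2, hss]
          exact hshift _
      exact fwd_core haIoo hbIoo haLev hsa2 hsaLev hsaP hsaM heq
    · -- v is parent
      obtain ⟨hxIoo, hxLev⟩ := hx0fact n' k' hn' hk'
      have hLn : L < n' + 1 := by
        by_contra hcon
        push_neg at hcon
        apply hv.2
        rw [hvb] at hvx
        rw [hvb, hvx]
        exact hmemF _ (n'+1) ⟨hxIoo.1.le, hxIoo.2⟩
          ⟨2*(k':ℤ)+1, by push_cast; ring⟩ hcon
      have hbx : ((b:ℝ):Circle𝕋) = (((2*(k':ℝ)+1)/2^(n'+1) : ℝ):Circle𝕋) := hvb ▸ hvx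
      have hmb : mb = n' + 1 := exactLev_coe_congr (by omega) (by omega) hbLev hxLev hbx
      rw [hGu, hGv]
      have hshift : ∀ d : ℝ, (((2*(k':ℝ)+1)/2^(n'+1) + d : ℝ):Circle𝕋) = ((b + d : ℝ):Circle𝕋) :=
        fun d => coe_shift hbx.symm d
      have hss : n' + 2 = mb + 1 := by omega
      have heq : ((a:ℝ):Circle𝕋) = ((b + 1/2^(mb+1) : ℝ):Circle𝕋) ∨
          ((a:ℝ):Circle𝕋) = ((b - 1/2^(mb+1) : ℝ):Circle𝕋) := by
        have hd1 := (harith n' k').1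
        have hd2 := (harith n' k').2
        rcases huy with huy | huy
        · right
          rw [← hua, huy, hd1, hss, sub_eq_add_neg, sub_eq_add_neg]
          exact hshift _
        · left
          rw [← hua, huy, hd2, hss]
          exact hshift _
      exact gamma_symm (fwd_core hbIoo haIoo hbLev hsb2 hsbLev hsbP hsbM heq)
    · -- u = 0 ∈ F
      exfalso
      apply hu.2
      rw [hu0]
      have h00 : ((0:ℝ):Circle𝕋) = (0:Circle𝕋) := by simp
      rw [← h00]
      exact hmemF 0 0 (by norm_num) ⟨0, by norm_num⟩ (by omega)
    · exfalso
      apply hv.2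
      rw [hv0]
      have h00 : ((0:ℝ):Circle𝕋) = (0:Circle𝕋) := by simp
      rw [← h00]
      exact hmemF 0 0 (by norm_num) ⟨0, by norm_num⟩ (by omega)
  · -- backward
    intro hadj
    rcases hadj with ⟨n', hn', k', hk', ⟨hux, hvy⟩ | ⟨hvx, huy⟩⟩ | ⟨hu0, hvh⟩ | ⟨hv0, huh⟩
    · -- g u is parent
      obtain ⟨hxIoo, hxLev⟩ := hx0fact n' k' hn' hk'
      have hxa : ((φ a:ℝ):Circle𝕋) = (((2*(k':ℝ)+1)/2^(n'+1) : ℝ):Circle𝕋) := hGu ▸ hux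
      have hsaeq : sa = n' + 1 :=
        exactLev_coe_congr (by omega) (by omega) hsaLev hxLev hxa
      have hshift : ∀ d : ℝ, (((2*(k':ℝ)+1)/2^(n'+1) + d : ℝ):Circle𝕋) = ((φ a + d : ℝ):Circle𝕋) :=
        fun d => coe_shift hxa.symm d
      have heq : ((φ b : ℝ) : Circle𝕋) = ((φ a + 1/2^(sa+1) : ℝ) : Circle𝕋) ∨
          ((φ b : ℝ) : Circle𝕋) = ((φ a - 1/2^(sa+1) : ℝ) : Circle𝕋) := by
        have hd1 := (harith n' k').1
        have hd2 := (harith n' k').2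
        have hss : n' + 2 = sa + 1 := by omega
        rcases hvy with hvy | hvy
        · right
          rw [← hGv, hvy, hd1, hss, sub_eq_add_neg, sub_eq_add_neg]
          exact hshift _
        · left
          rw [← hGv, hvy, hd2, hss]
          exact hshift _
      rw [hua, hvb]
      exact back_core hmono hT haIoo hbIoo haLev (by omega) hsaP hsaM heq
    · -- g v is parent
      obtain ⟨hxIoo, hxLev⟩ := hx0fact n' k' hn' hk'
      have hxb : ((φ b:ℝ):Circle𝕋) = (((2*(k':ℝ)+1)/2^(n'+1) : ℝ):Circle𝕋) := hGv ▸ hvx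
      have hsbeq : sb = n' + 1 :=
        exactLev_coe_congr (by omega) (by omega) hsbLev hxLev hxb
      have hshift : ∀ d : ℝ, (((2*(k':ℝ)+1)/2^(n'+1) + d : ℝ):Circle𝕋) = ((φ b + d : ℝ):Circle𝕋) :=
        fun d => coe_shift hxb.symm d
      have heq : ((φ a : ℝ) : Circle𝕋) = ((φ b + 1/2^(sb+1) : ℝ) : Circle𝕋) ∨
          ((φ a : ℝ) : Circle𝕋) = ((φ b - 1/2^(sb+1) : ℝ) : Circle𝕋) := by
        have hd1 := (harith n' k').1
        have hd2 := (harith n' k').2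
        have hss : n' + 2 = sb + 1 := by omega
        rcases huy with huy | huy
        · right
          rw [← hGu, huy, hd1, hss, sub_eq_add_neg, sub_eq_add_neg]
          exact hshift _
        · left
          rw [← hGu, huy, hd2, hss]
          exact hshift _
      rw [hua, hvb]
      exact gamma_symm (back_core hmono hT hbIoo haIoo hbLev (by omega) hsbP hsbM heq)
    · -- g u = 0: impossible
      exact absurd (hGu ▸ hu0) (coe_ne_zero_of_lev hsa2 hsaLev)
    · exact absurd (hGu ▸ huh) (coe_ne_half_of_lev hsa2 hsaLev)
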